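/- Let τ > 0 and let (X, υ) be a compact metric measure space with more than one point such that υ is atomless and (X, υ) satisfies the (1, 1)-Poincaré inequality for τ. Then h(X) ≥ 1/(τ · diam X), where diam X is the diameter of X. -/

import Mathlib

open MeasureTheory Metric Filter Set
open scoped Topology NNReal ENNReal
open Classical

variable {X : Type*} [MetricSpace X]

/-- A real-valued function is Lipschitz (with some constant). -/
def IsLipFun (f : X → ℝ) : Prop := ∃ K : ℝ≥0, LipschitzWith K f

/-- The pointwise Lipschitz constant `Lip f (x)`:
`0` if `x` is isolated, and otherwise the limit (= infimum, by monotonicity)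
as `r → 0` of `sup_{y ∈ B_r(x), y ≠ x} |f x - f y| / dist x y`. -/
noncomputable def pLip (f : X → ℝ) (x : X) : ℝ :=
  if 𝓝[≠] x = ⊥ then 0
  else ⨅ r : Ioi (0:ℝ), sSup ((fun y => |f x - f y| / dist x y) '' (ball x r.1 \ {x}))

/-- `γ` is a (unit-speed) minimal geodesic from `x` to `y`. -/
def IsMinGeodesic (γ : ℝ → X) (x y : X) : Prop :=
  γ 0 = x ∧ γ (dist x y) = y ∧
    ∀ s ∈ Icc (0:ℝ) (dist x y), ∀ t ∈ Icc (0:ℝ) (dist x y), dist (γ s) (γ t) = |s - t|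

/-- A metric space is geodesic if any two points are joined by a minimal geodesic. -/
def IsGeodesicSpace (Y : Type*) [MetricSpace Y] : Prop :=
  ∀ x y : Y, ∃ γ : ℝ → Y, IsMinGeodesic γ x y

section MeasureDefs
variable [MeasurableSpace X] (υ : Measure X)

/-- The doubling condition for `κ`. -/
def DoublingFor (κ : ℝ) : Prop :=
  ∀ x : X, ∀ r : ℝ, 0 < r → υ (ball x (2*r)) ≤ (2:ℝ≥0∞) ^ κ * υ (ball x r)

/-- The `(q,p)`-Poincaré inequality for `τ` (for Lipschitz functions). -/
def PoincareFor (q p τ : ℝ) : Prop :=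
  ∀ x : X, ∀ r : ℝ, 0 < r → ∀ f : X → ℝ, IsLipFun f →
    (⨍ y in ball x r, |f y - ⨍ z in ball x r, f z ∂υ| ^ q ∂υ) ^ (1/q) ≤
      τ * r * ((⨍ y in ball x r, (pLip f y) ^ p ∂υ) ^ (1/p))

/-- `F_g(x,y)`: the infimum over minimal geodesics `γ` from `x` to `y` of
`∫_0^{d(x,y)} g(γ(s)) ds`. -/
noncomputable def segF (g : X → ℝ≥0∞) (x y : X) : ℝ≥0∞ :=
  ⨅ γ ∈ {γ : ℝ → X | IsMinGeodesic γ x y}, ∫⁻ s in Icc (0:ℝ) (dist x y), g (γ s)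

/-- The segment inequality for `lam`. -/
def SegmentIneqFor (lam : ℝ) : Prop :=
  ∀ x : X, ∀ r : ℝ, 0 < r → ∀ g : X → ℝ≥0∞, Measurable g →
    (∫⁻ pr in (ball x r) ×ˢ (ball x r), segF g pr.1 pr.2 ∂(υ.prod υ)) ≤
      ENNReal.ofReal (lam * r) * υ (ball x r) * ∫⁻ z in ball x (3*r), g z ∂υ

/-- The first eigenvalue of the `p`-Laplacian (`∞` if there is no competitor). -/
noncomputable def lambda1 (p : ℝ) : ℝ≥0∞ :=
  ⨅ f ∈ {f : X → ℝ | IsLipFun f ∧ (∫ x, |f x| ^ p ∂υ) = 1 ∧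
      (∫ x, |f x| ^ (p-2) * f x ∂υ) = 0},
    ENNReal.ofReal (∫ x, (pLip f x) ^ p ∂υ)

/-- Minkowski's exterior boundary measure
`υ⁺(A) = liminf_{r → 0+} (υ(B_r(A)) - υ(A))/r`. -/
noncomputable def minkBoundary (A : Set X) : ℝ≥0∞ :=
  Filter.liminf (fun r : ℝ => (υ (thickening r A) - υ A) / ENNReal.ofReal r) (𝓝[>] (0:ℝ))

/-- The Cheeger constant (`∞` if there is no competitor). -/
noncomputable def cheeger : ℝ≥0∞ :=
  ⨅ A ∈ {A : Set X | MeasurableSet A ∧ 0 < υ A ∧ υ A ≤ 1/2}, minkBoundary υ A / υ A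

/-- `λ_{1,p}` for `p ∈ [1, ∞)`, with `λ_{1,1} := h(X)` the Cheeger constant. -/
noncomputable def lam1 (p : ℝ) : ℝ≥0∞ := if p = 1 then cheeger υ else lambda1 υ p

/-- `c_p(f) = inf_{c ∈ ℝ} (∫ |f - c|^p dυ)^{1/p}`. -/
noncomputable def cP (p : ℝ) (f : X → ℝ) : ℝ :=
  ⨅ c : ℝ, (∫ x, |f x - c| ^ p ∂υ) ^ (1/p)

/-- `M` is a median of `f`. -/
def IsMedian (f : X → ℝ) (M : ℝ) : Prop :=
  (1/2 : ℝ≥0∞) ≤ υ {x | M ≤ f x} ∧ (1/2 : ℝ≥0∞) ≤ υ {x | f x ≤ M}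

end MeasureDefs

/-- The global Lipschitz constant `sup_{a ≠ b} |f a - f b| / dist a b`. -/
noncomputable def globalLip (f : X → ℝ) : ℝ :=
  sSup {L : ℝ | ∃ a b : X, a ≠ b ∧ L = |f a - f b| / dist a b}

section AuxLemmas

variable {X : Type*} [MetricSpace X]

private lemma bddBelow_pLip (f : X → ℝ) (x : X) :
    BddBelow (Set.range fun r : Ioi (0:ℝ) =>
      sSup ((fun y => |f x - f y| / dist x y) '' (ball x r.1 \ {x}))) := by
  refine ⟨0, ?_⟩
  rintro v ⟨r, rfl⟩
  refine Real.sSup_nonneg fun v hv => ?_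
  obtain ⟨y, _, rfl⟩ := hv
  positivity

private lemma pLip_nonneg' (f : X → ℝ) (x : X) : 0 ≤ pLip f x := by
  unfold pLip
  split_ifs with h
  · exact le_rfl
  · have : Nonempty (Ioi (0:ℝ)) := ⟨⟨1, Set.mem_Ioi.2 one_pos⟩⟩
    refine le_ciInf fun r => Real.sSup_nonneg fun v hv => ?_
    obtain ⟨y, _, rfl⟩ := hv
    positivity

private lemma pLip_le_of_lip {f : X → ℝ} {K : ℝ≥0} (hf : LipschitzWith K f) (x : X) :
    pLip f x ≤ K := by
  unfold pLip
  split_ifs with h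
  · exact K.coe_nonneg
  · refine ciInf_le_of_le (bddBelow_pLip f x) ⟨1, Set.mem_Ioi.2 one_pos⟩ ?_
    refine Real.sSup_le ?_ K.coe_nonneg
    rintro v ⟨y, ⟨_, hyx⟩, rfl⟩
    show |f x - f y| / dist x y ≤ ↑K
    have hd : 0 < dist x y := dist_pos.2 fun h' => hyx (mem_singleton_iff.2 h'.symm)
    rw [div_le_iff₀ hd]
    calc |f x - f y| = dist (f x) (f y) := (Real.dist_eq _ _).symm
      _ ≤ K * dist x y := hf.dist_le_mul x y

private lemma pLip_le_zero_of_const {f : X → ℝ} {x : X} {ρ : ℝ} (hρ : 0 < ρ)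
    (h : ∀ y ∈ ball x ρ, f y = f x) : pLip f x ≤ 0 := by
  unfold pLip
  split_ifs with h'
  · exact le_rfl
  · refine ciInf_le_of_le (bddBelow_pLip f x) ⟨ρ, Set.mem_Ioi.2 hρ⟩ ?_
    refine Real.sSup_le ?_ le_rfl
    rintro v ⟨y, ⟨hy, _⟩, rfl⟩
    show |f x - f y| / dist x y ≤ 0
    rw [h y hy, sub_self, abs_zero, zero_div]

private lemma key_ineq {X : Type*} [MetricSpace X] [CompactSpace X] [MeasurableSpace X]
    [BorelSpace X] (υ : Measure X) [IsProbabilityMeasure υ]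
    {τ R : ℝ} (hτ : 0 < τ) (hR : Metric.diam (Set.univ : Set X) < R)
    (hpoin : PoincareFor υ 1 1 τ) {A : Set X} (hA : MeasurableSet A)
    {s r r' : ℝ} (hs : 0 < s) (hsr : s < r) (hrr' : r < r')
    (hne : (thickening r A)ᶜ.Nonempty) :
    2 * (υ A).toReal * (1 - (υ (thickening r' A)).toReal) ≤
      τ * R * (((υ (thickening r' A)).toReal - (υ A).toReal) / s) := by
  obtain ⟨x₀, -⟩ := id hne
  set U := thickening r A with hU_def
  set a : ℝ := (υ A).toReal with ha_def
  set T : ℝ := (υ (thickening r' A)).toReal with hT_def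
  have hr : 0 < r := hs.trans hsr
  have hr' : 0 < r' := hr.trans hrr'
  have hboundU : Bornology.IsBounded (Set.univ : Set X) := isCompact_univ.isBounded
  have hR0 : 0 < R := lt_of_le_of_lt Metric.diam_nonneg hR
  set f : X → ℝ := fun y => min 1 (Metric.infDist y Uᶜ / s) with hf_def
  have hUc : Uᶜ.Nonempty := hne
  have hlipd : ∀ y z : X, Metric.infDist y Uᶜ ≤ Metric.infDist z Uᶜ + dist y z :=
    fun y z => Metric.infDist_le_infDist_add_dist
  have hK : ((s.toNNReal⁻¹ : ℝ≥0) : ℝ) = s⁻¹ := by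
    rw [NNReal.coe_inv, Real.coe_toNNReal _ hs.le]
  have hlip : LipschitzWith s.toNNReal⁻¹ f := by
    refine LipschitzWith.of_dist_le_mul fun y z => ?_
    rw [Real.dist_eq, hK]
    have h1 : |Metric.infDist y Uᶜ - Metric.infDist z Uᶜ| ≤ dist y z := by
      rw [abs_sub_le_iff]
      constructor
      · linarith [hlipd y z, dist_comm y z]
      · linarith [hlipd z y, dist_comm y z]
    have h2 : |f y - f z| ≤ |Metric.infDist y Uᶜ / s - Metric.infDist z Uᶜ / s| := by
      simpa using abs_min_sub_min_le_max (1:ℝ) (Metric.infDist y Uᶜ / s) 1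
        (Metric.infDist z Uᶜ / s)
    calc |f y - f z| ≤ |Metric.infDist y Uᶜ / s - Metric.infDist z Uᶜ / s| := h2
      _ = |Metric.infDist y Uᶜ - Metric.infDist z Uᶜ| / s := by
          rw [div_sub_div_same, abs_div, abs_of_pos hs]
      _ ≤ dist y z / s := by gcongr
      _ = s⁻¹ * dist y z := by rw [div_eq_inv_mul]
  have hf01 : ∀ y, 0 ≤ f y ∧ f y ≤ 1 := fun y =>
    ⟨le_min one_pos.le (div_nonneg Metric.infDist_nonneg hs.le), min_le_left _ _⟩
  -- f = 1 on a neighborhood of each point of A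
  have hfA : ∀ y ∈ A, ∀ z ∈ ball y (r - s), f z = 1 := by
    intro y hy z hz
    have hdy : r ≤ Metric.infDist y Uᶜ := by
      by_contra hlt
      push_neg at hlt
      obtain ⟨w, hw, hdw⟩ := (Metric.infDist_lt_iff hUc).1 hlt
      exact hw (Metric.mem_thickening_iff.2 ⟨y, hy, by rw [dist_comm]; exact hdw⟩)
    have hzy : dist y z < r - s := by rw [dist_comm]; exact mem_ball.1 hz
    have hdz : s ≤ Metric.infDist z Uᶜ := by linarith [hlipd y z]
    have h1 : (1:ℝ) ≤ Metric.infDist z Uᶜ / s := (one_le_div hs).2 hdz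
    simp only [hf_def]
    exact min_eq_left h1
  have hclU : closure U ⊆ cthickening r A :=
    closure_minimal (thickening_subset_cthickening r A) isClosed_cthickening
  have hf0 : ∀ z, z ∉ U → f z = 0 := by
    intro z hz
    have hz' : z ∈ Uᶜ := hz
    simp only [hf_def]
    rw [Metric.infDist_zero_of_mem hz', zero_div]
    exact min_eq_right zero_le_one
  -- Integrability
  have hfint : Integrable f υ :=
    integrableOn_univ.1 (hlip.continuous.continuousOn.integrableOn_compact isCompact_univ)
  -- ball = univ
  have hball : ball x₀ R = Set.univ := by
    refine eq_univ_of_forall fun y => ?_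
    rw [mem_ball]
    exact lt_of_le_of_lt (Metric.dist_le_diam_of_mem hboundU (mem_univ y) (mem_univ x₀)) hR
  have hpoin' := hpoin x₀ R hR0 f ⟨_, hlip⟩
  simp only [div_one, Real.rpow_one, hball, Measure.restrict_univ,
    average_eq_integral] at hpoin'
  set m := ∫ z, f z ∂υ with hm_def
  -- m ≤ T
  have hind_meas : MeasurableSet (thickening r' A) := isOpen_thickening.measurableSet
  have hm_le : m ≤ T := by
    have hfle : ∀ y, f y ≤ (thickening r' A).indicator (fun _ => (1:ℝ)) y := by
      intro y
      by_cases hy : y ∈ thickening r' A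
      · rw [indicator_of_mem hy]; exact (hf01 y).2
      · rw [indicator_of_notMem hy, hf0 y (fun hU => hy (thickening_mono hrr'.le A hU))]
    have h := integral_mono hfint ((integrable_const (1:ℝ)).indicator hind_meas) hfle
    rwa [integral_indicator_const _ hind_meas, smul_eq_mul, mul_one] at h
  have hT1 : T ≤ 1 := by
    have := ENNReal.toReal_mono ENNReal.one_ne_top (prob_le_one (μ := υ) (s := thickening r' A))
    simpa using this
  have ha0 : 0 ≤ a := ENNReal.toReal_nonneg
  have hm0 : 0 ≤ m := integral_nonneg fun y => (hf01 y).1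
  have hm1 : m ≤ 1 := hm_le.trans hT1
  -- LHS lower bound
  have habs_int : Integrable (fun y => |f y - m|) υ := (hfint.sub (integrable_const m)).abs
  have hintA : ∫ y in A, f y ∂υ = a := by
    rw [setIntegral_congr_fun hA
      (fun y hy => hfA y hy y (mem_ball_self (by linarith)) : EqOn f (fun _ => (1:ℝ)) A)]
    rw [setIntegral_const, smul_eq_mul, mul_one, measureReal_def]
  have hint_total := integral_add_compl hA hfint
  have hμAc : (υ Aᶜ).toReal = 1 - a := by
    rw [measure_compl hA (measure_ne_top υ A), measure_univ,
      ENNReal.toReal_sub_of_le prob_le_one ENNReal.one_ne_top, ENNReal.toReal_one]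
  have hconst : ∀ s' : Set X, ∫ _ in s', m ∂υ = (υ s').toReal * m := fun s' => by
    rw [setIntegral_const, smul_eq_mul, measureReal_def]
  have habs1 : a * (1 - m) ≤ ∫ y in A, |f y - m| ∂υ := by
    have h1 : |∫ y in A, (f y - m) ∂υ| ≤ ∫ y in A, |f y - m| ∂υ := by
      simpa [Real.norm_eq_abs] using
        norm_integral_le_integral_norm (μ := υ.restrict A) (fun y => f y - m)
    have h2 : ∫ y in A, (f y - m) ∂υ = a - a * m := by
      rw [integral_sub hfint.integrableOn (integrable_const m).integrableOn, hintA, hconst A,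
        ← ha_def]
    rw [h2] at h1
    calc a * (1 - m) = a - a * m := by ring
      _ ≤ |a - a * m| := le_abs_self _
      _ ≤ _ := h1
  have habs2 : a * (1 - m) ≤ ∫ y in Aᶜ, |f y - m| ∂υ := by
    have h1 : |∫ y in Aᶜ, (f y - m) ∂υ| ≤ ∫ y in Aᶜ, |f y - m| ∂υ := by
      simpa [Real.norm_eq_abs] using
        norm_integral_le_integral_norm (μ := υ.restrict Aᶜ) (fun y => f y - m)
    have hintAc : ∫ y in Aᶜ, f y ∂υ = m - a := by
      have := hint_total
      rw [hintA] at this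
      linarith
    have h2 : ∫ y in Aᶜ, (f y - m) ∂υ = (m - a) - (1 - a) * m := by
      rw [integral_sub hfint.integrableOn (integrable_const m).integrableOn, hintAc, hconst Aᶜ,
        hμAc]
    rw [h2] at h1
    calc a * (1 - m) = |(m - a) - (1 - a) * m| := by
          rw [abs_of_nonpos (by nlinarith)]; ring
      _ ≤ _ := h1
  have hLHS : 2 * a * (1 - T) ≤ ∫ y, |f y - m| ∂υ := by
    rw [← integral_add_compl hA habs_int]
    have hTm : a * (1 - T) ≤ a * (1 - m) :=
      mul_le_mul_of_nonneg_left (by linarith) ha0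
    linarith
  -- RHS upper bound
  have hdiff_meas : MeasurableSet (cthickening r A \ A) :=
    isClosed_cthickening.measurableSet.diff hA
  have hpt : ∀ x, pLip f x ≤ ((cthickening r A \ A).indicator (fun _ => s⁻¹)) x := by
    intro x
    by_cases hxA : x ∈ A
    · have h0 : pLip f x ≤ 0 :=
        pLip_le_zero_of_const (by linarith : (0:ℝ) < r - s)
          (fun z hz => by rw [hfA x hxA z hz, hfA x hxA x (mem_ball_self (by linarith))])
      have hx_notmem : x ∉ cthickening r A \ A := fun h => h.2 hxA
      rw [indicator_of_notMem hx_notmem]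
      exact h0
    · by_cases hxC : x ∈ cthickening r A
      · have hmem : x ∈ cthickening r A \ A := ⟨hxC, hxA⟩
        rw [indicator_of_mem hmem]
        have := pLip_le_of_lip hlip x
        rwa [hK] at this
      · obtain ⟨ρ, hρ, hball'⟩ :=
          Metric.isOpen_iff.1 isClosed_cthickening.isOpen_compl x hxC
        have h0 : pLip f x ≤ 0 :=
          pLip_le_zero_of_const hρ (fun z hz => by
            rw [hf0 z (fun hU => (hball' hz) (thickening_subset_cthickening r A hU)),
              hf0 x (fun hU => hxC (thickening_subset_cthickening r A hU))])
        have hx_notmem : x ∉ cthickening r A \ A := fun h => hxC h.1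
        rw [indicator_of_notMem hx_notmem]
        exact h0
  have hgint : Integrable ((cthickening r A \ A).indicator (fun _ => s⁻¹)) υ :=
    (integrable_const _).indicator hdiff_meas
  have hmeasd : (υ (cthickening r A \ A)).toReal ≤ T - a := by
    have h1 : υ (cthickening r A \ A) ≤ υ (thickening r' A \ A) :=
      measure_mono (diff_subset_diff_left (cthickening_subset_thickening' hr' hrr' A))
    have h2 : υ (thickening r' A \ A) = υ (thickening r' A) - υ A :=
      measure_diff (self_subset_thickening hr' A) hA.nullMeasurableSet (measure_ne_top υ A)
    calc (υ (cthickening r A \ A)).toReal ≤ (υ (thickening r' A \ A)).toReal :=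
          ENNReal.toReal_mono (measure_ne_top υ _) h1
      _ = T - a := by
          rw [h2, ENNReal.toReal_sub_of_le (measure_mono (self_subset_thickening hr' A))
            (measure_ne_top υ _)]
  have hRHS : ∫ y, pLip f y ∂υ ≤ (T - a) / s := by
    have h1 : ∫ y, pLip f y ∂υ ≤ ∫ y, ((cthickening r A \ A).indicator (fun _ => s⁻¹)) y ∂υ :=
      integral_mono_of_nonneg (Filter.Eventually.of_forall (pLip_nonneg' f)) hgint
        (Filter.Eventually.of_forall hpt)
    rw [integral_indicator_const _ hdiff_meas, smul_eq_mul] at h1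
    calc ∫ y, pLip f y ∂υ ≤ (υ (cthickening r A \ A)).toReal * s⁻¹ := h1
      _ ≤ (T - a) * s⁻¹ := mul_le_mul_of_nonneg_right hmeasd (inv_nonneg.2 hs.le)
      _ = (T - a) / s := (div_eq_mul_inv _ _).symm
  calc 2 * a * (1 - T) ≤ ∫ y, |f y - m| ∂υ := hLHS
    _ ≤ τ * R * ∫ y, pLip f y ∂υ := hpoin'
    _ ≤ τ * R * ((T - a) / s) :=
        mul_le_mul_of_nonneg_left hRHS (by positivity)

end AuxLemmas

/-- lower bound for the Cheeger constant from a `(1,1)`-Poincaré inequality. -/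
theorem stmt16 {X : Type*} [MetricSpace X] [CompactSpace X] [MeasurableSpace X] [BorelSpace X]
    (υ : Measure X) [IsProbabilityMeasure υ]
    (τ : ℝ) (hτ : 0 < τ) (hnt : ∃ x y : X, x ≠ y)
    (hna : ∀ x : X, υ {x} = 0) (hpoin : PoincareFor υ 1 1 τ) :
    ENNReal.ofReal (1 / (τ * Metric.diam (Set.univ : Set X))) ≤ cheeger υ := by
  obtain ⟨p₀, q₀, hpq⟩ := hnt
  have hboundU : Bornology.IsBounded (Set.univ : Set X) := isCompact_univ.isBounded
  set D := Metric.diam (Set.univ : Set X) with hD_def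
  have hD : 0 < D :=
    lt_of_lt_of_le (dist_pos.2 hpq) (Metric.dist_le_diam_of_mem hboundU (mem_univ _) (mem_univ _))
  rw [cheeger]
  refine le_iInf₂ fun A hA => ?_
  obtain ⟨hAm, hA0, hA2⟩ := hA
  have hAfin : υ A ≠ ∞ := measure_ne_top υ A
  rw [ENNReal.le_div_iff_mul_le (Or.inl hA0.ne') (Or.inl hAfin)]
  set c : ℝ≥0∞ := ENNReal.ofReal (1 / (τ * D)) * υ A with hc_def
  have hcfin : c ≠ ∞ := ENNReal.mul_ne_top ENNReal.ofReal_ne_top hAfin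
  show c ≤ minkBoundary υ A
  by_cases hcl : υ (closure A) = υ A
  · -- main case: the closure has the same measure
    set a : ℝ := (υ A).toReal with ha_def
    have ha0 : 0 < a := ENNReal.toReal_pos hA0.ne' hAfin
    have ha2 : a ≤ 1/2 := by
      have h := ENNReal.toReal_mono (by norm_num : (1/2 : ℝ≥0∞) ≠ ∞) hA2
      rw [← ha_def] at h
      apply h.trans_eq
      simp [ENNReal.toReal_div]
    have hCeq : c = ENNReal.ofReal (a / (τ * D)) := by
      rw [hc_def, ← ENNReal.ofReal_toReal hAfin, ← ha_def,
        ← ENNReal.ofReal_mul (by positivity : (0:ℝ) ≤ 1 / (τ * D))]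
      congr 1
      ring
    rw [hCeq]
    set F : ℝ → ℝ := fun δ => 2 * (1 - δ) * a * (1/2 - δ) / (τ * (D + δ)) with hF_def
    have hFt : Tendsto (fun δ => ENNReal.ofReal (F δ)) (𝓝[>] (0:ℝ))
        (𝓝 (ENNReal.ofReal (a / (τ * D)))) := by
      have hcont : ContinuousAt F 0 := by
        apply ContinuousAt.div
        · fun_prop
        · fun_prop
        · simp only [add_zero]
          positivity
      have h0 : F 0 = a / (τ * D) := by
        simp only [hF_def, sub_zero, add_zero]
        ring
      have h2 : Tendsto (fun δ => ENNReal.ofReal (F δ)) (𝓝[>] (0:ℝ))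
          (𝓝 (ENNReal.ofReal (F 0))) :=
        (ENNReal.continuous_ofReal.continuousAt.tendsto.comp
          (hcont.tendsto.mono_left nhdsWithin_le_nhds))
      rwa [h0] at h2
    refine le_of_tendsto hFt ?_
    filter_upwards [Ioo_mem_nhdsGT_of_mem
      (show (0:ℝ) ∈ Ico (0:ℝ) (1/2) from ⟨le_rfl, one_half_pos⟩)] with δ hδ
    obtain ⟨hδ0, hδhalf⟩ := hδ
    rw [minkBoundary]
    refine Filter.le_liminf_of_le (by isBoundedDefault) ?_
    have htend : Tendsto (fun ρ => υ (thickening ρ A)) (𝓝[>] 0) (𝓝 (υ A)) := by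
      have h := tendsto_measure_thickening (μ := υ) (s := A) ⟨1, one_pos, measure_ne_top υ _⟩
      rwa [hcl] at h
    have hevT : ∀ᶠ ρ in 𝓝[>] (0:ℝ), υ (thickening ρ A) < υ A + ENNReal.ofReal δ :=
      htend.eventually_lt_const
        (ENNReal.lt_add_right hAfin (ENNReal.ofReal_pos.2 hδ0).ne')
    filter_upwards [hevT, self_mem_nhdsWithin] with ρ hTρ hρmem
    have hρ0 : 0 < ρ := hρmem
    set T : ℝ := (υ (thickening ρ A)).toReal with hT_def
    have hTfin : υ (thickening ρ A) ≠ ∞ := measure_ne_top υ _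
    have hTa : T < a + δ := by
      have h1 : (υ (thickening ρ A)).toReal < (υ A + ENNReal.ofReal δ).toReal := by
        rw [ENNReal.toReal_lt_toReal hTfin
          (ENNReal.add_ne_top.2 ⟨hAfin, ENNReal.ofReal_ne_top⟩)]
        exact hTρ
      rwa [ENNReal.toReal_add hAfin ENNReal.ofReal_ne_top, ENNReal.toReal_ofReal hδ0.le,
        ← ha_def, ← hT_def] at h1
    have haT : a ≤ T :=
      ENNReal.toReal_mono hTfin (measure_mono (self_subset_thickening hρ0 A))
    have hne : (thickening ((1 - δ/2) * ρ) A)ᶜ.Nonempty := by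
      rw [nonempty_compl]
      intro hU
      have hsub : thickening ((1 - δ/2) * ρ) A ⊆ thickening ρ A :=
        thickening_mono (by nlinarith) A
      have h1 : (1:ℝ≥0∞) ≤ υ (thickening ρ A) := by
        calc (1:ℝ≥0∞) = υ (thickening ((1 - δ/2) * ρ) A) := by rw [hU, measure_univ]
          _ ≤ υ (thickening ρ A) := measure_mono hsub
      have h2 : (1:ℝ) ≤ T := by
        have := ENNReal.toReal_mono hTfin h1
        simpa using this
      linarith
    have hkey := key_ineq υ hτ (lt_add_of_pos_right D hδ0) hpoin hAm
      (s := (1 - δ) * ρ) (r := (1 - δ/2) * ρ) (r' := ρ)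
      (by nlinarith) (by nlinarith) (by nlinarith) hne
    rw [← hT_def, ← ha_def] at hkey
    rw [ENNReal.le_div_iff_mul_le (Or.inl (ENNReal.ofReal_pos.2 hρ0).ne')
      (Or.inl ENNReal.ofReal_ne_top)]
    have hsub_eq : υ (thickening ρ A) - υ A = ENNReal.ofReal (T - a) := by
      rw [← ENNReal.ofReal_toReal hTfin, ← ENNReal.ofReal_toReal hAfin, ← hT_def, ← ha_def]
      exact (ENNReal.ofReal_sub _ ENNReal.toReal_nonneg).symm
    have hFδ : 0 ≤ F δ := by
      rw [hF_def]
      apply div_nonneg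
      · exact mul_nonneg (mul_nonneg (by linarith) ha0.le) (by linarith)
      · exact mul_nonneg hτ.le (by linarith)
    rw [hsub_eq, ← ENNReal.ofReal_mul hFδ]
    apply ENNReal.ofReal_le_ofReal
    rw [hF_def]
    rw [div_mul_eq_mul_div, div_le_iff₀ (by nlinarith : (0:ℝ) < τ * (D + δ))]
    have hpos1 : (0:ℝ) < (1 - δ) * ρ := by nlinarith
    have h6 : τ * (D + δ) * ((T - a) / ((1 - δ) * ρ)) * ((1 - δ) * ρ) =
        τ * (D + δ) * (T - a) := by
      rw [mul_assoc, div_mul_cancel₀ _ hpos1.ne']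
    have h7 : 2 * a * (1 - T) * ((1 - δ) * ρ) ≤ τ * (D + δ) * (T - a) := by
      have := mul_le_mul_of_nonneg_right hkey hpos1.le
      rwa [h6] at this
    have h5 : 1/2 - δ ≤ 1 - T := by linarith
    have h8 : 2 * a * ((1 - δ) * ρ) * (1/2 - δ) ≤ 2 * a * ((1 - δ) * ρ) * (1 - T) :=
      mul_le_mul_of_nonneg_left h5
        (mul_nonneg (by linarith) hpos1.le)
    nlinarith [h7, h8]
  · -- degenerate case: the closure has strictly bigger measure
    have hlt : υ A < υ (closure A) := lt_of_le_of_ne (measure_mono subset_closure) (Ne.symm hcl)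
    set δ0 : ℝ≥0∞ := υ (closure A) - υ A with hδ0_def
    have hδ0pos : 0 < δ0 := tsub_pos_of_lt hlt
    have hδ0fin : δ0 ≠ ∞ := (tsub_le_self.trans_lt (measure_lt_top υ _)).ne
    have hδ0r : 0 < δ0.toReal := ENNReal.toReal_pos hδ0pos.ne' hδ0fin
    have hctr : 0 ≤ c.toReal := ENNReal.toReal_nonneg
    rw [minkBoundary]
    refine Filter.le_liminf_of_le (by isBoundedDefault) ?_
    have hev : Set.Ioc (0:ℝ) (δ0.toReal / (c.toReal + 1)) ∈ 𝓝[>] (0:ℝ) :=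
      Ioc_mem_nhdsGT_of_mem ⟨le_rfl, by positivity⟩
    filter_upwards [hev] with ρ hρ
    have hρ0 : 0 < ρ := hρ.1
    have h1 : δ0 ≤ υ (thickening ρ A) - υ A :=
      tsub_le_tsub_right (measure_mono (closure_subset_thickening hρ0 A)) _
    refine le_trans ?_ (ENNReal.div_le_div_right h1 _)
    rw [ENNReal.le_div_iff_mul_le (Or.inl (ENNReal.ofReal_pos.2 hρ0).ne')
      (Or.inl ENNReal.ofReal_ne_top)]
    calc c * ENNReal.ofReal ρ = ENNReal.ofReal (c.toReal * ρ) := by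
          rw [ENNReal.ofReal_mul ENNReal.toReal_nonneg, ENNReal.ofReal_toReal hcfin]
      _ ≤ δ0 := by
          rw [← ENNReal.ofReal_toReal hδ0fin]
          apply ENNReal.ofReal_le_ofReal
          have hρ2 : ρ ≤ δ0.toReal / (c.toReal + 1) := hρ.2
          rw [le_div_iff₀ (by positivity)] at hρ2
          nlinarith
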